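/- For all real numbers a > 0 and b > 0, (Γ(a+b)/(Γ(a)Γ(b))) · ∫_0^1 x^{a−1} (1−x)^{b−1} · (−x log x − (1−x) log(1−x)) dx = ψ(a+b+1) − (a/(a+b))·ψ(a+1) − (b/(a+b))·ψ(b+1), where the integral is with respect to Lebesgue measure on (0,1). -/

import Mathlib

open Real MeasureTheory

/-- The digamma function: derivative of `log ∘ Γ`. -/
noncomputable def digamma (x : ℝ) : ℝ := deriv (fun y => Real.log (Real.Gamma y)) x

open Set

lemma betaIntegrand_integrableOn {p q : ℝ} (hp : 0 < p) (hq : 0 < q) :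
    IntegrableOn (fun x : ℝ => x ^ (p - 1) * (1 - x) ^ (q - 1)) (Ioo 0 1) := by
  have hc := (Complex.betaIntegral_convergent (u := (p : ℂ)) (v := (q : ℂ))
    (by simpa using hp) (by simpa using hq)).norm
  have hc' : IntegrableOn
      (fun x : ℝ => ‖(x : ℂ) ^ ((p : ℂ) - 1) * ((1 : ℂ) - x) ^ ((q : ℂ) - 1)‖) (Ioo 0 1) := by
    have := (intervalIntegrable_iff_integrableOn_Ioc_of_le (by norm_num : (0:ℝ) ≤ 1)).mp hc
    exact this.mono_set Ioo_subset_Ioc_self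
  refine hc'.congr_fun (fun x hx => ?_) measurableSet_Ioo
  obtain ⟨hx0, hx1⟩ := hx
  beta_reduce
  rw [norm_mul, Complex.norm_cpow_eq_rpow_re_of_pos hx0]
  have h1x : (0:ℝ) < 1 - x := by linarith
  have : ((1 : ℂ) - (x : ℂ)) = ((1 - x : ℝ) : ℂ) := by push_cast; ring
  rw [this, Complex.norm_cpow_eq_rpow_re_of_pos h1x]
  simp

lemma betaIntegral_real {p q : ℝ} (hp : 0 < p) (hq : 0 < q) :
    ∫ x in Ioo (0:ℝ) 1, x ^ (p - 1) * (1 - x) ^ (q - 1)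
      = Real.Gamma p * Real.Gamma q / Real.Gamma (p + q) := by
  have h := Complex.Gamma_mul_Gamma_eq_betaIntegral (s := (p:ℂ)) (t := (q:ℂ))
    (by simpa using hp) (by simpa using hq)
  have hG : (0:ℝ) < Real.Gamma (p + q) := Real.Gamma_pos_of_pos (by linarith)
  have hb : Complex.betaIntegral p q
      = ((∫ x in (0:ℝ)..1, x ^ (p - 1) * (1 - x) ^ (q - 1) : ℝ) : ℂ) := by
    rw [Complex.betaIntegral, ← intervalIntegral.integral_ofReal]
    refine intervalIntegral.integral_congr (fun x hx => ?_)
    rw [uIcc_of_le (by norm_num : (0:ℝ) ≤ 1)] at hx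
    obtain ⟨hx0, hx1⟩ := hx
    push_cast
    rw [Complex.ofReal_cpow hx0, Complex.ofReal_cpow (by linarith : (0:ℝ) ≤ 1 - x)]
    push_cast
    ring
  have hIoo : (∫ x in (0:ℝ)..1, x ^ (p - 1) * (1 - x) ^ (q - 1))
      = ∫ x in Ioo (0:ℝ) 1, x ^ (p - 1) * (1 - x) ^ (q - 1) := by
    rw [intervalIntegral.integral_of_le (by norm_num : (0:ℝ) ≤ 1),
      integral_Ioc_eq_integral_Ioo]
  rw [hb, hIoo] at h
  have hpq : Complex.Gamma ((p:ℂ) + q) = ((Real.Gamma (p+q) : ℝ) : ℂ) := by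
    rw [← Complex.ofReal_add, Complex.Gamma_ofReal]
  rw [Complex.Gamma_ofReal, Complex.Gamma_ofReal, hpq] at h
  have := h
  rw [← Complex.ofReal_mul, ← Complex.ofReal_mul] at this
  have h2 : Real.Gamma p * Real.Gamma q
      = Real.Gamma (p + q) * ∫ x in Ioo (0:ℝ) 1, x ^ (p - 1) * (1 - x) ^ (q - 1) := by
    exact_mod_cast this
  field_simp
  linarith [h2]

lemma contOn_rpow (c : ℝ) : ContinuousOn (fun x : ℝ => x ^ c) (Ioo 0 1) :=
  fun x hx => (Real.continuousAt_rpow_const x c (Or.inl hx.1.ne')).continuousWithinAt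

lemma contOn_rpow1 (c : ℝ) : ContinuousOn (fun x : ℝ => (1 - x) ^ c) (Ioo 0 1) := by
  intro x hx
  have h1x : (1:ℝ) - x ≠ 0 := by have h2 := hx.2; intro h; simp only [sub_eq_zero] at h; linarith
  exact ((Real.continuousAt_rpow_const (1-x) c (Or.inl h1x)).comp
    ((continuous_const.sub continuous_id).continuousAt)).continuousWithinAt

lemma contOn_log : ContinuousOn (fun x : ℝ => Real.log x) (Ioo (0:ℝ) 1) :=
  fun x hx => (Real.continuousAt_log hx.1.ne').continuousWithinAt

lemma contOn_log1 : ContinuousOn (fun x : ℝ => Real.log (1 - x)) (Ioo (0:ℝ) 1) := by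
  intro x hx
  have h1x : (1:ℝ) - x ≠ 0 := by have := hx.2; intro h; linarith [sub_eq_zero.mp h]
  exact ((Real.continuousAt_log h1x).comp
    ((continuous_const.sub continuous_id).continuousAt)).continuousWithinAt

lemma abs_log_le_rpow {x ε : ℝ} (hx : 0 < x) (hx1 : x ≤ 1) (hε : 0 < ε) :
    |Real.log x| ≤ x ^ (-ε) / ε := by
  have hlog : Real.log x ≤ 0 := Real.log_nonpos hx.le hx1
  rw [abs_of_nonpos hlog]
  have := Real.log_le_rpow_div (x := x⁻¹) (by positivity) hε
  rw [Real.log_inv, Real.inv_rpow hx.le, ← Real.rpow_neg hx.le] at this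
  linarith

lemma betaIntegrand_log_integrableOn {p q : ℝ} (hp : 0 < p) (hq : 0 < q) :
    IntegrableOn (fun x : ℝ => x ^ (p - 1) * |Real.log x| * (1 - x) ^ (q - 1)) (Ioo 0 1) := by
  have hint : IntegrableOn
      (fun x : ℝ => x ^ (p/2 - 1) * (1 - x) ^ (q - 1) * (2/p)) (Ioo 0 1) :=
    (betaIntegrand_integrableOn (half_pos hp) hq).mul_const _
  refine hint.integrable.mono ?_ ?_
  · exact (((contOn_rpow (p-1)).mul contOn_log.abs).mul
      (contOn_rpow1 (q-1))).aestronglyMeasurable measurableSet_Ioo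
  · filter_upwards [ae_restrict_mem measurableSet_Ioo] with x hx
    obtain ⟨hx0, hx1⟩ := hx
    have h1x : (0:ℝ) < 1 - x := by linarith
    have hla : |Real.log x| ≤ x ^ (-(p/2)) / (p/2) :=
      abs_log_le_rpow hx0 hx1.le (half_pos hp)
    rw [Real.norm_eq_abs, Real.norm_eq_abs, abs_mul, abs_mul,
      abs_of_nonneg (by positivity : (0:ℝ) ≤ x ^ (p-1)),
      abs_of_nonneg (by positivity : (0:ℝ) ≤ (1-x) ^ (q-1)), abs_abs,
      abs_of_nonneg (by positivity : (0:ℝ) ≤ x ^ (p/2-1) * (1-x)^(q-1) * (2/p))]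
    have key : x ^ (p - 1) * |Real.log x| ≤ x ^ (p/2 - 1) * (2/p) := by
      calc x ^ (p - 1) * |Real.log x| ≤ x ^ (p - 1) * (x ^ (-(p/2)) / (p/2)) := by
            exact mul_le_mul_of_nonneg_left hla (by positivity)
        _ = x ^ (p/2 - 1) * (2/p) := by
            rw [div_eq_mul_inv, ← mul_assoc, ← Real.rpow_add hx0]
            have : p - 1 + -(p/2) = p/2 - 1 := by ring
            rw [this, inv_div]

    calc x ^ (p - 1) * |Real.log x| * (1 - x) ^ (q - 1)
        ≤ x ^ (p/2 - 1) * (2/p) * (1 - x) ^ (q - 1) :=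
          mul_le_mul_of_nonneg_right key (by positivity)
      _ = x ^ (p/2 - 1) * (1 - x) ^ (q - 1) * (2/p) := by ring

lemma betaIntegrand_log1_integrableOn {p q : ℝ} (hp : 0 < p) (hq : 0 < q) :
    IntegrableOn (fun x : ℝ => x ^ (p - 1) * ((1 - x) ^ (q - 1) * |Real.log (1 - x)|))
      (Ioo 0 1) := by
  have hint : IntegrableOn
      (fun x : ℝ => x ^ (p - 1) * (1 - x) ^ (q/2 - 1) * (2/q)) (Ioo 0 1) :=
    (betaIntegrand_integrableOn hp (half_pos hq)).mul_const _
  refine hint.integrable.mono ?_ ?_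
  · exact ((contOn_rpow (p-1)).mul
      ((contOn_rpow1 (q-1)).mul contOn_log1.abs)).aestronglyMeasurable measurableSet_Ioo
  · filter_upwards [ae_restrict_mem measurableSet_Ioo] with x hx
    obtain ⟨hx0, hx1⟩ := hx
    have h1x : (0:ℝ) < 1 - x := by linarith
    have hla : |Real.log (1-x)| ≤ (1-x) ^ (-(q/2)) / (q/2) :=
      abs_log_le_rpow h1x (by linarith) (half_pos hq)
    rw [Real.norm_eq_abs, Real.norm_eq_abs, abs_mul, abs_mul,
      abs_of_nonneg (by positivity : (0:ℝ) ≤ x ^ (p-1)),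
      abs_of_nonneg (by positivity : (0:ℝ) ≤ (1-x) ^ (q-1)), abs_abs,
      abs_of_nonneg (by positivity : (0:ℝ) ≤ x ^ (p-1) * (1-x)^(q/2-1) * (2/q))]
    have key : (1 - x) ^ (q - 1) * |Real.log (1-x)| ≤ (1 - x) ^ (q/2 - 1) * (2/q) := by
      calc (1-x) ^ (q - 1) * |Real.log (1-x)|
          ≤ (1-x) ^ (q - 1) * ((1-x) ^ (-(q/2)) / (q/2)) :=
            mul_le_mul_of_nonneg_left hla (by positivity)
        _ = (1-x) ^ (q/2 - 1) * (2/q) := by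
            rw [div_eq_mul_inv, ← mul_assoc, ← Real.rpow_add h1x]
            have : q - 1 + -(q/2) = q/2 - 1 := by ring
            rw [this, inv_div]

    calc x ^ (p - 1) * ((1 - x) ^ (q - 1) * |Real.log (1-x)|)
        ≤ x ^ (p - 1) * ((1 - x) ^ (q/2 - 1) * (2/q)) :=
          mul_le_mul_of_nonneg_left key (by positivity)
      _ = x ^ (p - 1) * (1 - x) ^ (q/2 - 1) * (2/q) := by ring

lemma duis_left {p q : ℝ} (hp : 0 < p) (hq : 0 < q) :
    IntegrableOn (fun x : ℝ => x ^ (p - 1) * Real.log x * (1 - x) ^ (q - 1)) (Ioo 0 1) ∧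
      HasDerivAt (fun t => ∫ x in Ioo (0:ℝ) 1, x ^ (t - 1) * (1 - x) ^ (q - 1))
        (∫ x in Ioo (0:ℝ) 1, x ^ (p - 1) * Real.log x * (1 - x) ^ (q - 1)) p := by
  have h := hasDerivAt_integral_of_dominated_loc_of_deriv_le
    (μ := volume.restrict (Ioo (0:ℝ) 1)) (x₀ := p) (s := Metric.ball p (p/2))
    (F := fun t (x : ℝ) => x ^ (t - 1) * (1 - x) ^ (q - 1))
    (F' := fun t (x : ℝ) => x ^ (t - 1) * Real.log x * (1 - x) ^ (q - 1))
    (bound := fun x : ℝ => x ^ (p/2 - 1) * |Real.log x| * (1 - x) ^ (q - 1))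
    (Metric.ball_mem_nhds p (half_pos hp))
    (Filter.Eventually.of_forall fun t =>
      (((contOn_rpow (t-1)).mul (contOn_rpow1 (q-1))).aestronglyMeasurable measurableSet_Ioo))
    (betaIntegrand_integrableOn hp hq)
    ((((contOn_rpow (p-1)).mul contOn_log).mul
      (contOn_rpow1 (q-1))).aestronglyMeasurable measurableSet_Ioo)
    ?_ (betaIntegrand_log_integrableOn (half_pos hp) hq) ?_
  · exact h
  · filter_upwards [ae_restrict_mem measurableSet_Ioo] with x hx t ht
    obtain ⟨hx0, hx1⟩ := hx
    have h1x : (0:ℝ) < 1 - x := by linarith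
    have hte : p/2 - 1 ≤ t - 1 := by
      have := Metric.mem_ball.mp ht
      have := abs_lt.mp this
      linarith [this.1]
    have hrp : x ^ (t - 1) ≤ x ^ (p/2 - 1) :=
      Real.rpow_le_rpow_of_exponent_ge hx0 hx1.le hte
    rw [Real.norm_eq_abs, abs_mul, abs_mul,
      abs_of_nonneg (by positivity : (0:ℝ) ≤ x ^ (t-1)),
      abs_of_nonneg (by positivity : (0:ℝ) ≤ (1-x) ^ (q-1))]
    have : x ^ (t-1) * |Real.log x| ≤ x ^ (p/2-1) * |Real.log x| :=
      mul_le_mul_of_nonneg_right hrp (abs_nonneg _)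
    exact mul_le_mul_of_nonneg_right this (by positivity)
  · filter_upwards [ae_restrict_mem measurableSet_Ioo] with x hx t _
    obtain ⟨hx0, _⟩ := hx
    have h1 : HasDerivAt (fun s : ℝ => x ^ s) (x ^ (t-1) * Real.log x) (t - 1) :=
      (Real.hasStrictDerivAt_const_rpow hx0 (t-1)).hasDerivAt
    have h2 : HasDerivAt (fun s : ℝ => x ^ (s - 1)) (x ^ (t-1) * Real.log x) t := by
      have := h1.comp t ((hasDerivAt_id t).sub_const 1)
      simpa [Function.comp_def] using this
    exact h2.mul_const _

lemma duis_right {p q : ℝ} (hp : 0 < p) (hq : 0 < q) :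
    IntegrableOn (fun x : ℝ => x ^ (p - 1) * ((1 - x) ^ (q - 1) * Real.log (1 - x)))
        (Ioo 0 1) ∧
      HasDerivAt (fun t => ∫ x in Ioo (0:ℝ) 1, x ^ (p - 1) * (1 - x) ^ (t - 1))
        (∫ x in Ioo (0:ℝ) 1, x ^ (p - 1) * ((1 - x) ^ (q - 1) * Real.log (1 - x))) q := by
  have h := hasDerivAt_integral_of_dominated_loc_of_deriv_le
    (μ := volume.restrict (Ioo (0:ℝ) 1)) (x₀ := q) (s := Metric.ball q (q/2))
    (F := fun t (x : ℝ) => x ^ (p - 1) * (1 - x) ^ (t - 1))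
    (F' := fun t (x : ℝ) => x ^ (p - 1) * ((1 - x) ^ (t - 1) * Real.log (1 - x)))
    (bound := fun x : ℝ => x ^ (p - 1) * ((1 - x) ^ (q/2 - 1) * |Real.log (1 - x)|))
    (Metric.ball_mem_nhds q (half_pos hq))
    (Filter.Eventually.of_forall fun t =>
      (((contOn_rpow (p-1)).mul (contOn_rpow1 (t-1))).aestronglyMeasurable measurableSet_Ioo))
    (betaIntegrand_integrableOn hp hq)
    (((contOn_rpow (p-1)).mul
      ((contOn_rpow1 (q-1)).mul contOn_log1)).aestronglyMeasurable measurableSet_Ioo)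
    ?_ (betaIntegrand_log1_integrableOn hp (half_pos hq)) ?_
  · exact h
  · filter_upwards [ae_restrict_mem measurableSet_Ioo] with x hx t ht
    obtain ⟨hx0, hx1⟩ := hx
    have h1x : (0:ℝ) < 1 - x := by linarith
    have hte : q/2 - 1 ≤ t - 1 := by
      have := abs_lt.mp (Metric.mem_ball.mp ht)
      linarith [this.1]
    have hrp : (1-x) ^ (t - 1) ≤ (1-x) ^ (q/2 - 1) :=
      Real.rpow_le_rpow_of_exponent_ge h1x (by linarith) hte
    rw [Real.norm_eq_abs, abs_mul, abs_mul,
      abs_of_nonneg (by positivity : (0:ℝ) ≤ x ^ (p-1)),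
      abs_of_nonneg (by positivity : (0:ℝ) ≤ (1-x) ^ (t-1))]
    have : (1-x) ^ (t-1) * |Real.log (1-x)| ≤ (1-x) ^ (q/2-1) * |Real.log (1-x)| :=
      mul_le_mul_of_nonneg_right hrp (abs_nonneg _)
    exact mul_le_mul_of_nonneg_left this (by positivity)
  · filter_upwards [ae_restrict_mem measurableSet_Ioo] with x hx t _
    obtain ⟨hx0, hx1⟩ := hx
    have h1x : (0:ℝ) < 1 - x := by linarith
    have h1 : HasDerivAt (fun s : ℝ => (1-x) ^ s) ((1-x) ^ (t-1) * Real.log (1-x)) (t - 1) :=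
      (Real.hasStrictDerivAt_const_rpow h1x (t-1)).hasDerivAt
    have h2 : HasDerivAt (fun s : ℝ => (1-x) ^ (s - 1)) ((1-x) ^ (t-1) * Real.log (1-x)) t := by
      have := h1.comp t ((hasDerivAt_id t).sub_const 1)
      simpa [Function.comp_def] using this
    exact h2.const_mul _

lemma hasDerivAt_Gamma_digamma {p : ℝ} (hp : 0 < p) :
    HasDerivAt Real.Gamma (Real.Gamma p * digamma p) p := by
  have hne : ∀ m : ℕ, p ≠ -m := by
    intro m h
    have : (0:ℝ) ≤ (m:ℝ) := m.cast_nonneg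
    rw [h] at hp; linarith
  have hd : DifferentiableAt ℝ Real.Gamma p := Real.differentiableAt_Gamma hne
  have hG : HasDerivAt Real.Gamma (deriv Real.Gamma p) p := hd.hasDerivAt
  have hΓ : (0:ℝ) < Real.Gamma p := Real.Gamma_pos_of_pos hp
  have hlog : HasDerivAt (fun y => Real.log (Real.Gamma y))
      ((Real.Gamma p)⁻¹ * deriv Real.Gamma p) p :=
    (Real.hasDerivAt_log hΓ.ne').comp p hG
  have hdig : digamma p = (Real.Gamma p)⁻¹ * deriv Real.Gamma p := hlog.deriv
  have : Real.Gamma p * digamma p = deriv Real.Gamma p := by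
    rw [hdig]; field_simp
  rw [this]; exact hG

lemma hasDerivAt_betaFn {p q : ℝ} (hp : 0 < p) (hq : 0 < q) :
    HasDerivAt (fun t => Real.Gamma t * Real.Gamma q / Real.Gamma (t + q))
      (Real.Gamma p * Real.Gamma q / Real.Gamma (p + q) * (digamma p - digamma (p + q))) p := by
  have hpq : (0:ℝ) < p + q := by linarith
  have h1 : HasDerivAt (fun t => Real.Gamma t * Real.Gamma q)
      (Real.Gamma p * digamma p * Real.Gamma q) p :=
    (hasDerivAt_Gamma_digamma hp).mul_const _
  have h2 : HasDerivAt (fun t => Real.Gamma (t + q))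
      (Real.Gamma (p + q) * digamma (p + q)) p := by
    have := (hasDerivAt_Gamma_digamma hpq).comp p ((hasDerivAt_id p).add_const q)
    simpa [Function.comp_def] using this
  have h3 : Real.Gamma (p + q) ≠ 0 := (Real.Gamma_pos_of_pos hpq).ne'
  have := h1.div h2 h3
  convert (this : HasDerivAt (fun t => Real.Gamma t * Real.Gamma q / Real.Gamma (t + q)) _ p) using 1
  have hΓp : Real.Gamma p ≠ 0 := (Real.Gamma_pos_of_pos hp).ne'
  have hΓq : Real.Gamma q ≠ 0 := (Real.Gamma_pos_of_pos hq).ne'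
  · rfl
  · rfl
  · rfl
  rw [div_mul_eq_mul_div, div_eq_div_iff h3 (pow_ne_zero 2 h3)]
  ring

lemma key_left {p q : ℝ} (hp : 0 < p) (hq : 0 < q) :
    ∫ x in Ioo (0:ℝ) 1, x ^ (p - 1) * Real.log x * (1 - x) ^ (q - 1)
      = Real.Gamma p * Real.Gamma q / Real.Gamma (p + q) * (digamma p - digamma (p + q)) := by
  have hd := (duis_left hp hq).2
  have heq : (fun t => ∫ x in Ioo (0:ℝ) 1, x ^ (t - 1) * (1 - x) ^ (q - 1))
      =ᶠ[nhds p] (fun t => Real.Gamma t * Real.Gamma q / Real.Gamma (t + q)) := by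
    filter_upwards [isOpen_Ioi.mem_nhds (mem_Ioi.mpr hp)] with t ht
    exact betaIntegral_real ht hq
  have hd' : HasDerivAt (fun t => Real.Gamma t * Real.Gamma q / Real.Gamma (t + q))
      (∫ x in Ioo (0:ℝ) 1, x ^ (p - 1) * Real.log x * (1 - x) ^ (q - 1)) p :=
    hd.congr_of_eventuallyEq heq.symm
  exact hd'.unique (hasDerivAt_betaFn hp hq)

lemma key_right {p q : ℝ} (hp : 0 < p) (hq : 0 < q) :
    ∫ x in Ioo (0:ℝ) 1, x ^ (p - 1) * ((1 - x) ^ (q - 1) * Real.log (1 - x))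
      = Real.Gamma p * Real.Gamma q / Real.Gamma (p + q) * (digamma q - digamma (p + q)) := by
  have hd := (duis_right hp hq).2
  have heq : (fun t => ∫ x in Ioo (0:ℝ) 1, x ^ (p - 1) * (1 - x) ^ (t - 1))
      =ᶠ[nhds q] (fun t => Real.Gamma t * Real.Gamma p / Real.Gamma (t + p)) := by
    filter_upwards [isOpen_Ioi.mem_nhds (mem_Ioi.mpr hq)] with t ht
    rw [betaIntegral_real hp ht, mul_comm (Real.Gamma p), add_comm p t]
  have hd' : HasDerivAt (fun t => Real.Gamma t * Real.Gamma p / Real.Gamma (t + p))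
      (∫ x in Ioo (0:ℝ) 1, x ^ (p - 1) * ((1 - x) ^ (q - 1) * Real.log (1 - x))) q :=
    hd.congr_of_eventuallyEq heq.symm
  have := hd'.unique (hasDerivAt_betaFn hq hp)
  rw [this, mul_comm (Real.Gamma q), add_comm q p]

/-- expected Shannon entropy of a Bernoulli parameter under a Beta prior. -/
theorem beta_expected_entropy (a b : ℝ) (ha : 0 < a) (hb : 0 < b) :
    (Real.Gamma (a + b) / (Real.Gamma a * Real.Gamma b)) *
      ∫ x in Set.Ioo (0 : ℝ) 1,
        x ^ (a - 1) * (1 - x) ^ (b - 1) * (-x * Real.log x - (1 - x) * Real.log (1 - x))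
      = digamma (a + b + 1) - (a / (a + b)) * digamma (a + 1)
          - (b / (a + b)) * digamma (b + 1) := by
  have ha1 : (0:ℝ) < a + 1 := by linarith
  have hb1 : (0:ℝ) < b + 1 := by linarith
  have hcongr : ∫ x in Ioo (0:ℝ) 1,
      x ^ (a - 1) * (1 - x) ^ (b - 1) * (-x * Real.log x - (1 - x) * Real.log (1 - x))
      = ∫ x in Ioo (0:ℝ) 1,
      (-(x ^ ((a + 1) - 1) * Real.log x * (1 - x) ^ (b - 1))
        - x ^ (a - 1) * ((1 - x) ^ ((b + 1) - 1) * Real.log (1 - x))) := by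
    refine setIntegral_congr_fun measurableSet_Ioo (fun x hx => ?_)
    obtain ⟨hx0, hx1⟩ := hx
    have h1x : (0:ℝ) < 1 - x := by linarith
    have e1 : x ^ ((a + 1) - 1) = x ^ (a - 1) * x := by
      rw [show (a + 1) - 1 = (a - 1) + 1 by ring, Real.rpow_add_one hx0.ne']
    have e2 : (1 - x) ^ ((b + 1) - 1) = (1 - x) ^ (b - 1) * (1 - x) := by
      rw [show (b + 1) - 1 = (b - 1) + 1 by ring, Real.rpow_add_one h1x.ne']
    rw [e1, e2]; ring
  have hi1 := (duis_left ha1 hb).1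
  have hi2 := (duis_right ha hb1).1
  have hi1' : IntegrableOn
      (fun x : ℝ => -(x ^ ((a + 1) - 1) * Real.log x * (1 - x) ^ (b - 1))) (Ioo 0 1) := hi1.neg
  rw [hcongr, integral_sub hi1' hi2, integral_neg, key_left ha1 hb, key_right ha hb1]
  have hΓa : (0:ℝ) < Real.Gamma a := Real.Gamma_pos_of_pos ha
  have hΓb : (0:ℝ) < Real.Gamma b := Real.Gamma_pos_of_pos hb
  have hΓab : (0:ℝ) < Real.Gamma (a + b) := Real.Gamma_pos_of_pos (by linarith)
  have hab : (0:ℝ) < a + b := by linarith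
  have ga : Real.Gamma (a + 1) = a * Real.Gamma a := Real.Gamma_add_one ha.ne'
  have gb : Real.Gamma (b + 1) = b * Real.Gamma b := Real.Gamma_add_one hb.ne'
  have gab : Real.Gamma (a + b + 1) = (a + b) * Real.Gamma (a + b) :=
    Real.Gamma_add_one hab.ne'
  rw [show a + 1 + b = a + b + 1 by ring, show a + (b + 1) = a + b + 1 by ring, ga, gb, gab]
  field_simp
  ring
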